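/- Fix an integer k with 1 ≤ k ≤ N−1 and a function γ : ℝ → ℂ, and let 𝓝_{−k,γ} be the linear operator on H_N defined by 𝓝_{−k,γ}ψ^N_n := γ(nℏ)·ψ^N_{n−k} for k ≤ n ≤ N−1 and 𝓝_{−k,γ}ψ^N_n := 0 for 0 ≤ n < k. Then for every z ∈ ℂ∖{0}: 𝓝_{−k,γ}ψ^a_z = Σ_{n=0}^{N−1−k} conj(z)^k·ν_k(n)·√(C^N_n/C^N_{n+k})·γ((n+k)ℏ)·ã(τ(z)/ℏ − (n+k))·conj(φ_n(z))·φ_n. (This expresses 𝓝_{−k,γ}ψ^a_z = ψ^{Σ_{−k,γ}(z)a}_z, the lower-diagonal case of Proposition 3.4.) -/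

import Mathlib

open MeasureTheory Complex Real

noncomputable section

/-- The measure `dμ_N(z) = (1/π)·(1+|z|²)^{-(N+1)} dA(z)` on `ℂ`. -/
def muN (N : ℕ) : Measure ℂ :=
  volume.withDensity (fun z => ENNReal.ofReal (1 / (Real.pi * (1 + ‖z‖ ^ 2) ^ (N + 1))))

/-- The basis vectors `φ_n(z) = √(N!/(n!(N−1−n)!))·zⁿ`. -/
def phiN (N n : ℕ) : ℂ → ℂ :=
  fun z => (Real.sqrt ((N.factorial : ℝ) / (n.factorial * (N - 1 - n).factorial)) : ℂ) * z ^ n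

/-- The coherent state `ρ_{z₀}(z) = N·(1+conj(z₀)·z)^{N−1}`. -/
def rhoN (N : ℕ) (z₀ : ℂ) : ℂ → ℂ :=
  fun z => (N : ℂ) * (1 + (starRingEnd ℂ) z₀ * z) ^ (N - 1)

/-- The inner product `⟨P,Q⟩ = ∫ P(z) conj(Q(z)) dμ_N(z)`, linear in the first argument. -/
def hermN (N : ℕ) (P Q : ℂ → ℂ) : ℂ :=
  ∫ z, P z * (starRingEnd ℂ) (Q z) ∂(muN N)

/-- The Fourier transform `ã(y) = (2π)^{-1/2} ∫ e^{ixy} a(x) dx`. -/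
def tildeF (a : ℝ → ℂ) (y : ℝ) : ℂ :=
  (Real.sqrt (2 * Real.pi))⁻¹ * ∫ x : ℝ, Complex.exp (Complex.I * x * y) * a x

/-- `τ(z) = |z|²/(1+|z|²)`. -/
def tauS (z : ℂ) : ℝ := ‖z‖ ^ 2 / (1 + ‖z‖ ^ 2)

/-- The building vector `ψ^a_z = ∫ a(t)·e^{iτ(z)t/ℏ}·ρ_{e^{it}z} dt/√(2π)`. -/
def psiA (N : ℕ) (ℏ : ℝ) (a : ℝ → ℂ) (z : ℂ) : ℂ → ℂ :=
  fun w => ∫ t : ℝ, a t * Complex.exp (Complex.I * (tauS z) * t / (ℏ : ℂ)) *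
    rhoN N (Complex.exp (Complex.I * t) * z) w / (Real.sqrt (2 * Real.pi) : ℂ)

/-- `C^N_n = N·binom(N−1,n)·∫₀¹ |ã((τ−nℏ)/ℏ)|²·(τ/(1−τ))ⁿ·(1−τ)^{N−1} dτ`. -/
def CNn (N : ℕ) (ℏ : ℝ) (a : ℝ → ℂ) (n : ℕ) : ℝ :=
  N * ((N - 1).choose n) *
    ∫ τ in (0:ℝ)..1, ‖tildeF a ((τ - n * ℏ) / ℏ)‖ ^ 2 * (τ / (1 - τ)) ^ n * (1 - τ) ^ (N - 1)

/-- The normalized vectors `ψ^N_n = √(C^N_n)·φ_n`. -/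
def psiNn (N : ℕ) (ℏ : ℝ) (a : ℝ → ℂ) (n : ℕ) : ℂ → ℂ :=
  fun z => (Real.sqrt (CNn N ℏ a n) : ℂ) * phiN N n z

lemma integ (a : SchwartzMap ℝ ℂ) (y : ℝ) :
    Integrable (fun t : ℝ => Complex.exp (Complex.I * t * y) * a t) := by
  refine a.integrable.bdd_mul (c := 1) ?_ (Filter.Eventually.of_forall fun t => ?_)
  · exact (Complex.continuous_exp.comp (by continuity)).aestronglyMeasurable
  · rw [Complex.norm_exp]
    simp [Complex.mul_re, Complex.mul_im]

lemma fact_eq (N n : ℕ) (hN : 1 ≤ N) (hn : n ≤ N - 1) :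
    ((N.factorial : ℝ) / (n.factorial * (N - 1 - n).factorial))
      = (N : ℝ) * ((N-1).choose n) := by
  have h := Nat.choose_mul_factorial_mul_factorial hn
  have hN' : N.factorial = N * (N-1).factorial := by
    cases N with
    | zero => omega
    | succ m => simp [Nat.factorial_succ]
  have h1 : (0:ℝ) < n.factorial := by exact_mod_cast n.factorial_pos
  have h2 : (0:ℝ) < (N-1-n).factorial := by exact_mod_cast (N-1-n).factorial_pos
  rw [div_eq_iff (by positivity)]
  have hnat : N * ((N-1).choose n * (n.factorial * (N-1-n).factorial)) = N.factorial := by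
    rw [hN', ← h]; ring
  have : (N.factorial : ℝ) = N * ((N-1).choose n * (n.factorial * (N-1-n).factorial)) := by
    exact_mod_cast hnat.symm
  rw [this]; ring

lemma psiA_eq (N : ℕ) (hN : 1 ≤ N) (ℏ : ℝ) (a : SchwartzMap ℝ ℂ) (z w : ℂ) :
    psiA N ℏ (⇑a) z w = ∑ n ∈ Finset.range N,
      tildeF (⇑a) (tauS z / ℏ - n) * (starRingEnd ℂ) (phiN N n z) * phiN N n w := by
  have hs : (0:ℝ) < Real.sqrt (2 * Real.pi) := Real.sqrt_pos.2 (by positivity)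
  have hsC : ((Real.sqrt (2 * Real.pi) : ℝ) : ℂ) ≠ 0 := by exact_mod_cast hs.ne'
  have key : (fun t : ℝ => a t * Complex.exp (Complex.I * (tauS z) * t / (ℏ : ℂ)) *
      rhoN N (Complex.exp (Complex.I * t) * z) w / (Real.sqrt (2 * Real.pi) : ℂ))
      = fun t : ℝ => ∑ n ∈ Finset.range N,
        Complex.exp (Complex.I * t * ((tauS z / ℏ - n : ℝ) : ℂ)) * a t *
          ((N : ℂ) * ((N-1).choose n : ℂ) * ((starRingEnd ℂ) z) ^ n * w ^ n
            / (Real.sqrt (2 * Real.pi) : ℂ)) := by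
    funext t
    have hpow : ∀ c : ℂ, (1 + c) ^ (N - 1)
        = ∑ n ∈ Finset.range N, ((N-1).choose n : ℂ) * c ^ n := by
      intro c
      rw [add_comm, add_pow, show N - 1 + 1 = N from Nat.succ_pred_eq_of_pos hN]
      exact Finset.sum_congr rfl fun n _ => by ring
    have hconj : (starRingEnd ℂ) (Complex.exp (Complex.I * t) * z)
        = Complex.exp (-(Complex.I * t)) * (starRingEnd ℂ) z := by
      rw [map_mul, ← Complex.exp_conj]
      congr 2
      simp [Complex.conj_I]
    rw [rhoN]
    simp only [hconj, hpow, Finset.mul_sum]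
    rw [Finset.sum_div]
    apply Finset.sum_congr rfl
    intro n _
    have e1 : Complex.exp (Complex.I * (tauS z : ℂ) * t / (ℏ:ℂ))
        * Complex.exp (-(Complex.I * t)) ^ n
        = Complex.exp (Complex.I * t * ((tauS z / ℏ - n : ℝ) : ℂ)) := by
      rw [← Complex.exp_nat_mul, ← Complex.exp_add]
      congr 1
      push_cast
      ring
    rw [← e1, mul_pow, mul_pow]
    ring
  rw [show psiA N ℏ (⇑a) z w = ∫ t : ℝ, a t * Complex.exp (Complex.I * (tauS z) * t / (ℏ : ℂ)) *
    rhoN N (Complex.exp (Complex.I * t) * z) w / (Real.sqrt (2 * Real.pi) : ℂ) from rfl, key]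
  rw [MeasureTheory.integral_finset_sum _ (fun n _ => (integ a _).mul_const _)]
  refine Finset.sum_congr rfl fun n hn => ?_
  rw [MeasureTheory.integral_mul_const]
  have hint : (∫ t : ℝ, Complex.exp (Complex.I * t * ((tauS z / ℏ - n : ℝ):ℂ)) * a t)
      = (Real.sqrt (2 * Real.pi) : ℂ) * tildeF (⇑a) (tauS z / ℏ - n) := by
    rw [tildeF, Complex.ofReal_inv, ← mul_assoc, mul_inv_cancel₀ hsC, one_mul]
  rw [hint, phiN, phiN, map_mul, Complex.conj_ofReal, map_pow]
  have hnn : n ≤ N - 1 := by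
    have := Finset.mem_range.1 hn; omega
  have hsq : ((Real.sqrt ((N.factorial : ℝ) / (n.factorial * (N - 1 - n).factorial)) : ℝ):ℂ)
      * ((Real.sqrt ((N.factorial : ℝ) / (n.factorial * (N - 1 - n).factorial)) : ℝ):ℂ)
      = (N : ℂ) * ((N-1).choose n : ℂ) := by
    rw [← Complex.ofReal_mul, Real.mul_self_sqrt (by positivity), fact_eq N n hN hnn]
    push_cast; ring
  have hss : ((Real.sqrt (2*Real.pi):ℝ):ℂ) * ((Real.sqrt (2*Real.pi):ℝ):ℂ)⁻¹ = 1 :=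
    mul_inv_cancel₀ hsC
  set T := tildeF (⇑a) (tauS z / ℏ - n) with hT
  rw [div_eq_mul_inv]
  linear_combination T * ((N:ℂ) * ((N-1).choose n : ℂ) * (starRingEnd ℂ) z ^ n * w ^ n) * hss
    - T * (starRingEnd ℂ) z ^ n * w ^ n * hsq

/-- lower-diagonal case of Proposition 3.4: for
`𝓝_{−k,γ}ψ^N_n = γ(nℏ)·ψ^N_{n−k}` (for `k ≤ n ≤ N−1`, and `0` otherwise), one has, for
`z ≠ 0`,
`𝓝_{−k,γ}ψ^a_z = Σ_{n=0}^{N−1−k} conj(z)^k·ν_k(n)·√(C^N_n/C^N_{n+k})·γ((n+k)ℏ)·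
                  ã(τ(z)/ℏ−(n+k))·conj(φ_n(z))·φ_n`. -/

theorem stmt9 (N : ℕ) (hN : 1 ≤ N) (ℏ : ℝ) (hℏ : 0 < ℏ) (a : SchwartzMap ℝ ℂ)
    (hC : ∀ n : ℕ, n ≤ N - 1 → 0 < CNn N ℏ (⇑a) n)
    (k : ℕ) (hk1 : 1 ≤ k) (hk2 : k ≤ N - 1) (γ : ℝ → ℂ)
    (T : (ℂ → ℂ) →ₗ[ℂ] (ℂ → ℂ))
    (hT : ∀ n : ℕ, n ≤ N - 1 →
      T (psiNn N ℏ (⇑a) n)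
        = if k ≤ n then γ ((n : ℝ) * ℏ) • psiNn N ℏ (⇑a) (n - k) else 0)
    (z : ℂ) (hz : z ≠ 0) :
    T (psiA N ℏ (⇑a) z) = fun w => ∑ n ∈ Finset.range (N - k),
      ((starRingEnd ℂ) z) ^ k
        * (Real.sqrt (((N - 1 - n).choose k : ℝ) / ((n + k).choose k : ℝ)) : ℂ)
        * (Real.sqrt (CNn N ℏ (⇑a) n / CNn N ℏ (⇑a) (n + k)) : ℂ)
        * γ (((n : ℝ) + k) * ℏ)
        * tildeF (⇑a) (tauS z / ℏ - ((n : ℝ) + k))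
        * (starRingEnd ℂ) (phiN N n z) * phiN N n w := by
  classical
  have hkN : k ≤ N := by omega
  have hCpos : ∀ n, n < N → 0 < CNn N ℏ (⇑a) n := fun n hn => hC n (by omega)
  have hsqrtNe : ∀ n, n < N → ((Real.sqrt (CNn N ℏ (⇑a) n) : ℝ):ℂ) ≠ 0 := by
    intro n hn
    exact_mod_cast (Real.sqrt_pos.2 (hCpos n hn)).ne'
  have hpsiA : psiA N ℏ (⇑a) z = ∑ n ∈ Finset.range N,
      ((((Real.sqrt (CNn N ℏ (⇑a) n) : ℝ):ℂ))⁻¹ * tildeF (⇑a) (tauS z / ℏ - n)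
        * (starRingEnd ℂ) (phiN N n z)) • psiNn N ℏ (⇑a) n := by
    funext w
    rw [psiA_eq N hN ℏ a z w, Finset.sum_apply]
    refine Finset.sum_congr rfl fun n hn => ?_
    have h0 := hsqrtNe n (Finset.mem_range.1 hn)
    simp only [Pi.smul_apply, psiNn, smul_eq_mul]
    field_simp
  rw [hpsiA, map_sum]
  simp only [_root_.map_smul]
  have hTn : ∀ n ∈ Finset.range N,
      ((((Real.sqrt (CNn N ℏ (⇑a) n) : ℝ):ℂ))⁻¹ * tildeF (⇑a) (tauS z / ℏ - n)
        * (starRingEnd ℂ) (phiN N n z)) • T (psiNn N ℏ (⇑a) n)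
      = if k ≤ n then
          ((((Real.sqrt (CNn N ℏ (⇑a) n) : ℝ):ℂ))⁻¹ * tildeF (⇑a) (tauS z / ℏ - n)
            * (starRingEnd ℂ) (phiN N n z)) • (γ ((n:ℝ)*ℏ) • psiNn N ℏ (⇑a) (n-k))
        else 0 := by
    intro n hn
    rw [hT n (by have := Finset.mem_range.1 hn; omega)]
    split <;> simp
  rw [Finset.sum_congr rfl hTn]
  rw [Finset.range_eq_Ico, ← Finset.sum_Ico_consecutive _ (Nat.zero_le k) hkN]
  rw [Finset.sum_eq_zero (fun n hn => if_neg (by have := (Finset.mem_Ico.1 hn).2; omega)),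
    zero_add]
  rw [Finset.sum_congr rfl (fun n hn => if_pos (Finset.mem_Ico.1 hn).1)]
  rw [Finset.sum_Ico_eq_sum_range]
  funext w
  rw [Finset.sum_apply]
  refine Finset.sum_congr rfl fun i hi => ?_
  have hiNk : i < N - k := Finset.mem_range.1 hi
  rw [Nat.add_comm k i]
  have hik : i + k < N := by omega
  have hCik : 0 < CNn N ℏ (⇑a) (i+k) := hCpos _ hik
  have hCi : 0 < CNn N ℏ (⇑a) i := hCpos _ (by omega)
  -- the key factorial identity
  have hkey : ((N.factorial : ℝ)/((i+k).factorial * (N-1-(i+k)).factorial))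
      = (((N-1-i).choose k : ℝ)/(((i+k).choose k : ℝ)))
        * ((N.factorial : ℝ)/(i.factorial * (N-1-i).factorial)) := by
    rw [show N-1-(i+k) = N-1-i-k from by omega]
    have hki : k ≤ N-1-i := by omega
    have h1 := Nat.choose_mul_factorial_mul_factorial hki
    have h2 := Nat.choose_mul_factorial_mul_factorial (Nat.le_add_left k i)
    rw [Nat.add_sub_cancel] at h2
    have c1 : ((N-1-i).choose k : ℝ) * k.factorial * (N-1-i-k).factorial
        = (N-1-i).factorial := by exact_mod_cast h1
    have c2 : ((i+k).choose k : ℝ) * k.factorial * i.factorial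
        = (i+k).factorial := by exact_mod_cast h2
    have hd1 : ((i+k).factorial : ℝ) * (N-1-i-k).factorial ≠ 0 := by positivity
    have hd2 : ((i+k).choose k : ℝ) ≠ 0 := by
      exact_mod_cast (Nat.choose_pos (Nat.le_add_left k i)).ne'
    have hd3 : (i.factorial : ℝ) * (N-1-i).factorial ≠ 0 := by positivity
    rw [div_mul_div_comm, div_eq_div_iff hd1 (by positivity)]
    linear_combination ((N-1-i).choose k : ℝ) * (N.factorial : ℝ) * (N-1-i-k).factorial * c2
      - (N.factorial : ℝ) * ((i+k).choose k : ℝ) * i.factorial * c1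
  -- the sqrt identity over ℝ
  have R : (Real.sqrt (CNn N ℏ (⇑a) (i+k)))⁻¹
        * Real.sqrt ((N.factorial : ℝ)/((i+k).factorial * (N-1-(i+k)).factorial))
        * Real.sqrt (CNn N ℏ (⇑a) i)
      = Real.sqrt (((N-1-i).choose k : ℝ)/(((i+k).choose k : ℝ)))
        * Real.sqrt (CNn N ℏ (⇑a) i / CNn N ℏ (⇑a) (i+k))
        * Real.sqrt ((N.factorial : ℝ)/(i.factorial * (N-1-i).factorial)) := by
    rw [← Real.sqrt_inv, ← Real.sqrt_mul (by positivity),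
      ← Real.sqrt_mul (by positivity) (CNn N ℏ (⇑a) i),
      ← Real.sqrt_mul (by positivity),
      ← Real.sqrt_mul (mul_nonneg (by positivity) (le_of_lt (div_pos hCi hCik)))]
    congr 1
    rw [hkey]
    ring
  have ecoef : (((Real.sqrt (CNn N ℏ (⇑a) (i+k)) : ℝ):ℂ))⁻¹
        * ((Real.sqrt ((N.factorial : ℝ)/((i+k).factorial * (N-1-(i+k)).factorial)) : ℝ):ℂ)
        * ((Real.sqrt (CNn N ℏ (⇑a) i) : ℝ):ℂ)
      = ((Real.sqrt (((N-1-i).choose k : ℝ)/(((i+k).choose k : ℝ))) : ℝ):ℂ)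
        * ((Real.sqrt (CNn N ℏ (⇑a) i / CNn N ℏ (⇑a) (i+k)) : ℝ):ℂ)
        * ((Real.sqrt ((N.factorial : ℝ)/(i.factorial * (N-1-i).factorial)) : ℝ):ℂ) := by
    exact_mod_cast R
  have harg1 : (((i+k : ℕ)) : ℝ) = (i : ℝ) + k := by push_cast; ring
  simp only [Pi.smul_apply, smul_eq_mul, psiNn, phiN, Nat.add_sub_cancel, map_mul, map_pow,
    Complex.conj_ofReal, harg1, pow_add]
  linear_combination γ (((i:ℝ) + k) * ℏ) * tildeF (⇑a) (tauS z / ℏ - ((i:ℝ) + k))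
    * ((starRingEnd ℂ) z) ^ i * ((starRingEnd ℂ) z) ^ k * w ^ i
    * ((Real.sqrt ((N.factorial : ℝ)/(i.factorial * (N-1-i).factorial)) : ℝ):ℂ) * ecoef
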